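/- Define p_{α,k}(s, r) = s^{-(d+2-α)/2} e^{-r²/(k s)} for s > 0 and p_{α,k}(s,r) = 0 for s ≤ 0. For any α, β, k > 0 there is a constant c(α,β,k,d) > 0 such that for all t ∈ ℝ, r ≥ 0: ∫_ℝ ∫_{ℝ^d} p_{α,k}(s, |y|) p_{β,k}(t - s, |x - y|) dy ds = c(α,β,k,d) p_{α+β,k}(t, |x|) for all x ∈ ℝ^d (Chapman–Kolmogorov-type semigroup identity for the scaled heat kernels). -/

import Mathlib

open MeasureTheory Set Real

-- Gaussian convolution / completing the square
lemma gauss_conv (d : ℕ) (a b : ℝ) (ha : 0 < a) (hb : 0 < b) (x : EuclideanSpace ℝ (Fin d)) :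
    (∫ y : EuclideanSpace ℝ (Fin d), Real.exp (-‖y‖ ^ 2 * a) * Real.exp (-‖x - y‖ ^ 2 * b))
      = (π / (a + b)) ^ ((d : ℝ) / 2) * Real.exp (-(a * b / (a + b)) * ‖x‖ ^ 2) := by
  have hab : 0 < a + b := by linarith
  have key : ∀ y : EuclideanSpace ℝ (Fin d),
      Real.exp (-‖y‖ ^ 2 * a) * Real.exp (-‖x - y‖ ^ 2 * b)
        = Real.exp (-(a * b / (a + b)) * ‖x‖ ^ 2) *
            Real.exp (-(a + b) * ‖y - (b / (a + b)) • x‖ ^ 2) := by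
    intro y
    rw [← Real.exp_add, ← Real.exp_add]
    congr 1
    have h1 : ‖x - y‖ ^ 2 = ‖x‖ ^ 2 - 2 * (inner ℝ x y : ℝ) + ‖y‖ ^ 2 := norm_sub_sq_real x y
    have h2 : ‖y - (b / (a + b)) • x‖ ^ 2
        = ‖y‖ ^ 2 - 2 * ((b / (a + b)) * (inner ℝ x y : ℝ)) + (b / (a + b)) ^ 2 * ‖x‖ ^ 2 := by
      rw [norm_sub_sq_real, real_inner_smul_right, real_inner_comm, norm_smul, mul_pow,
        Real.norm_eq_abs, sq_abs]
    rw [h1, h2]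
    field_simp
    ring
  simp_rw [key]
  rw [MeasureTheory.integral_const_mul,
    integral_sub_right_eq_self
      (fun y : EuclideanSpace ℝ (Fin d) => Real.exp (-(a + b) * ‖y‖ ^ 2)) ((b / (a + b)) • x),
    GaussianFourier.integral_rexp_neg_mul_sq_norm hab]
  simp [finrank_euclideanSpace_fin]
  ring

lemma beta_ii {a b : ℝ} (ha : 0 < a) (hb : 0 < b) :
    IntervalIntegrable (fun u : ℝ => u ^ (a - 1) * (1 - u) ^ (b - 1)) volume 0 1 := by
  have hc := Complex.betaIntegral_convergent (u := (a : ℂ)) (v := (b : ℂ)) (by simpa) (by simpa)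
  rw [intervalIntegrable_iff_integrableOn_Ioc_of_le (by norm_num)] at hc ⊢
  have := hc.re
  refine this.congr ?_
  filter_upwards [ae_restrict_mem measurableSet_Ioc] with u hu
  have h0 : (0:ℝ) ≤ u := le_of_lt hu.1
  have h1 : (0:ℝ) ≤ 1 - u := by linarith [hu.2]
  have e1 : (u : ℂ) ^ ((a : ℂ) - 1) = ((u ^ (a - 1) : ℝ) : ℂ) := by
    rw [Complex.ofReal_cpow h0]; push_cast; ring_nf
  have e2 : (1 - (u : ℂ)) ^ ((b : ℂ) - 1) = (((1 - u) ^ (b - 1) : ℝ) : ℂ) := by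
    rw [Complex.ofReal_cpow h1]; push_cast; ring_nf
  simp [e1, e2, ← Complex.ofReal_mul]

lemma beta_pos {a b : ℝ} (ha : 0 < a) (hb : 0 < b) :
    0 < ∫ u in Ioo (0:ℝ) 1, u ^ (a - 1) * (1 - u) ^ (b - 1) := by
  rw [← integral_Ioc_eq_integral_Ioo, ← intervalIntegral.integral_of_le (by norm_num : (0:ℝ) ≤ 1)]
  refine intervalIntegral.intervalIntegral_pos_of_pos_on (beta_ii ha hb) ?_ (by norm_num)
  intro u hu
  have h0 : (0:ℝ) < u := hu.1
  have h1 : (0:ℝ) < 1 - u := by linarith [hu.2]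
  positivity

lemma beta_scale {a b t : ℝ} (ha : 0 < a) (hb : 0 < b) (ht : 0 < t) :
    (∫ s in Ioo (0:ℝ) t, s ^ (a - 1) * (t - s) ^ (b - 1))
      = t ^ (a + b - 1) * ∫ u in Ioo (0:ℝ) 1, u ^ (a - 1) * (1 - u) ^ (b - 1) := by
  have ht' : t ≠ 0 := ne_of_gt ht
  rw [← MeasureTheory.integral_indicator measurableSet_Ioo,
      ← MeasureTheory.integral_indicator (measurableSet_Ioo (a := (0:ℝ)) (b := 1))]
  have key : ∀ s : ℝ, (Ioo (0:ℝ) t).indicator (fun s => s ^ (a - 1) * (t - s) ^ (b - 1)) s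
      = t ^ (a + b - 2) *
        (Ioo (0:ℝ) 1).indicator (fun u => u ^ (a - 1) * (1 - u) ^ (b - 1)) (t⁻¹ * s) := by
    intro s
    have hmem : s ∈ Ioo (0:ℝ) t ↔ t⁻¹ * s ∈ Ioo (0:ℝ) 1 := by
      constructor
      · rintro ⟨h1, h2⟩
        constructor
        · positivity
        · rw [mul_comm, ← div_eq_mul_inv, div_lt_one ht]; exact h2
      · rintro ⟨h1, h2⟩
        constructor
        · nlinarith [inv_pos.2 ht]
        · rw [mul_comm, ← div_eq_mul_inv, div_lt_one ht] at h2; exact h2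
    by_cases hs : s ∈ Ioo (0:ℝ) t
    · rw [indicator_of_mem hs, indicator_of_mem (hmem.1 hs)]
      have h0s : 0 < s := hs.1
      have hst : s < t := hs.2
      have e1 : s ^ (a - 1) = t ^ (a - 1) * (t⁻¹ * s) ^ (a - 1) := by
        rw [← Real.mul_rpow (le_of_lt ht) (by positivity)]
        congr 1
        field_simp
      have e2 : (t - s) ^ (b - 1) = t ^ (b - 1) * (1 - t⁻¹ * s) ^ (b - 1) := by
        rw [← Real.mul_rpow (le_of_lt ht) (by have := (hmem.1 hs).2; linarith)]
        congr 1
        field_simp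
      rw [e1, e2, show a + b - 2 = (a - 1) + (b - 1) by ring, Real.rpow_add ht]
      ring
    · rw [indicator_of_notMem hs, indicator_of_notMem (fun h => hs (hmem.2 h)), mul_zero]
  simp_rw [key]
  rw [MeasureTheory.integral_const_mul]
  rw [show (fun s : ℝ => (Ioo (0:ℝ) 1).indicator (fun u => u ^ (a - 1) * (1 - u) ^ (b - 1)) (t⁻¹ * s))
      = fun s : ℝ => (Ioo (0:ℝ) 1).indicator (fun u => u ^ (a - 1) * (1 - u) ^ (b - 1)) (t⁻¹ * s) from rfl]
  rw [MeasureTheory.Measure.integral_comp_mul_left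
      ((Ioo (0:ℝ) 1).indicator (fun u => u ^ (a - 1) * (1 - u) ^ (b - 1))) t⁻¹]
  rw [inv_inv, abs_of_pos ht, smul_eq_mul]
  rw [← mul_assoc, ← Real.rpow_add_one ht' (a + b - 2)]
  ring_nf

theorem stmt_11 (d : ℕ) (hd : 1 ≤ d) (α β k : ℝ) (hα : 0 < α) (hβ : 0 < β)
    (hk : 0 < k) (hαβ : α + β < d + 2)
    (P : ℝ → ℝ → ℝ → ℝ)
    (hP : ∀ a s r, P a s r =
      if 0 < s then s ^ (-(((d : ℝ) + 2 - a) / 2)) * Real.exp (-(r ^ 2) / (k * s)) else 0) :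
    ∃ c : ℝ, 0 < c ∧ ∀ (t : ℝ) (x : EuclideanSpace ℝ (Fin d)),
      (∫ s : ℝ, ∫ y : EuclideanSpace ℝ (Fin d), P α s ‖y‖ * P β (t - s) ‖x - y‖) =
        c * P (α + β) t ‖x‖ := by
  have hα2 : (0:ℝ) < α / 2 := by linarith
  have hβ2 : (0:ℝ) < β / 2 := by linarith
  refine ⟨(π * k) ^ ((d:ℝ)/2) * ∫ u in Ioo (0:ℝ) 1, u ^ (α/2 - 1) * (1 - u) ^ (β/2 - 1),
    mul_pos (Real.rpow_pos_of_pos (by positivity) _) (beta_pos hα2 hβ2), ?_⟩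
  intro t x
  by_cases ht : 0 < t
  · set K := (π * k / t) ^ ((d:ℝ)/2) * Real.exp (-‖x‖^2 / (k*t)) with hK
    have hin : ∀ s : ℝ, (∫ y : EuclideanSpace ℝ (Fin d), P α s ‖y‖ * P β (t - s) ‖x - y‖)
        = (Ioo (0:ℝ) t).indicator
            (fun s => K * (s ^ (α/2 - 1) * (t - s) ^ (β/2 - 1))) s := by
      intro s
      by_cases hs : s ∈ Ioo (0:ℝ) t
      · obtain ⟨hs0, hst⟩ := hs
        have hts : 0 < t - s := by linarith
        rw [indicator_of_mem (Set.mem_Ioo.mpr ⟨hs0, hst⟩)]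
        have hks : (0:ℝ) < (k*s)⁻¹ := by positivity
        have hkts : (0:ℝ) < (k*(t-s))⁻¹ := by positivity
        have step : ∀ y : EuclideanSpace ℝ (Fin d),
            P α s ‖y‖ * P β (t - s) ‖x - y‖
              = (s ^ (-(((d:ℝ)+2-α)/2)) * (t-s) ^ (-(((d:ℝ)+2-β)/2))) *
                (Real.exp (-‖y‖^2 * (k*s)⁻¹) * Real.exp (-‖x - y‖^2 * (k*(t-s))⁻¹)) := by
          intro y
          rw [hP α s ‖y‖, hP β (t-s) ‖x-y‖, if_pos hs0, if_pos hts]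
          rw [show -(‖y‖^2) / (k*s) = -‖y‖^2 * (k*s)⁻¹ by ring,
              show -(‖x-y‖^2) / (k*(t-s)) = -‖x-y‖^2 * (k*(t-s))⁻¹ by ring]
          ring
        simp_rw [step]
        rw [MeasureTheory.integral_const_mul, gauss_conv d _ _ hks hkts x]
        have hk' : k ≠ 0 := ne_of_gt hk
        have hs' : s ≠ 0 := ne_of_gt hs0
        have hts' : t - s ≠ 0 := ne_of_gt hts
        have ht' : t ≠ 0 := ne_of_gt ht
        have e1 : π / ((k*s)⁻¹ + (k*(t-s))⁻¹) = (π * k / t) * (s * (t-s)) := by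
          rw [div_eq_iff (by positivity)]
          field_simp
          ring
        have e2 : (k*s)⁻¹ * (k*(t-s))⁻¹ / ((k*s)⁻¹ + (k*(t-s))⁻¹) = (k*t)⁻¹ := by
          rw [div_eq_iff (by positivity)]
          field_simp
          ring
        rw [e1, e2]
        have e3 : ((π * k / t) * (s * (t-s))) ^ ((d:ℝ)/2)
            = (π * k / t) ^ ((d:ℝ)/2) * (s ^ ((d:ℝ)/2) * (t-s) ^ ((d:ℝ)/2)) := by
          rw [Real.mul_rpow (by positivity) (by positivity),
            Real.mul_rpow (le_of_lt hs0) (le_of_lt hts)]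
        rw [e3]
        have e4 : s ^ (α/2 - 1) = s ^ (-(((d:ℝ)+2-α)/2)) * s ^ ((d:ℝ)/2) := by
          rw [← Real.rpow_add hs0]; congr 1; ring
        have e5 : (t-s) ^ (β/2 - 1) = (t-s) ^ (-(((d:ℝ)+2-β)/2)) * (t-s) ^ ((d:ℝ)/2) := by
          rw [← Real.rpow_add hts]; congr 1; ring
        have e6 : -((k*t)⁻¹) * ‖x‖^2 = -‖x‖^2 / (k*t) := by ring
        rw [hK, e4, e5, e6]
        ring
      · rw [indicator_of_notMem hs]
        have hz : ∀ y : EuclideanSpace ℝ (Fin d), P α s ‖y‖ * P β (t - s) ‖x - y‖ = 0 := by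
          intro y
          by_cases hs0 : 0 < s
          · have hns : ¬ 0 < t - s := by
              simp only [mem_Ioo, not_and, not_lt] at hs
              have := hs hs0; linarith
            rw [hP β (t-s) ‖x-y‖, if_neg hns, mul_zero]
          · rw [hP α s ‖y‖, if_neg hs0, zero_mul]
        simp only [hz, integral_zero]
    rw [MeasureTheory.integral_congr_ae (Filter.Eventually.of_forall hin),
      MeasureTheory.integral_indicator measurableSet_Ioo, MeasureTheory.integral_const_mul,
      beta_scale hα2 hβ2 ht, hP (α+β) t ‖x‖, if_pos ht]
    have f1 : (π * k / t) ^ ((d:ℝ)/2) = (π * k) ^ ((d:ℝ)/2) * t ^ (-((d:ℝ)/2)) := by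
      rw [Real.div_rpow (by positivity) (le_of_lt ht), Real.rpow_neg (le_of_lt ht),
        div_eq_mul_inv]
    have f2 : t ^ (-((d:ℝ)/2)) * t ^ (α/2 + β/2 - 1) = t ^ (-(((d:ℝ)+2-(α+β))/2)) := by
      rw [← Real.rpow_add ht]; congr 1; ring
    rw [hK, f1]
    calc (π * k) ^ ((d:ℝ)/2) * t ^ (-((d:ℝ)/2)) * Real.exp (-‖x‖^2 / (k*t)) *
          (t ^ (α/2 + β/2 - 1) * ∫ u in Ioo (0:ℝ) 1, u ^ (α/2 - 1) * (1 - u) ^ (β/2 - 1))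
        = (π * k) ^ ((d:ℝ)/2) * (∫ u in Ioo (0:ℝ) 1, u ^ (α/2 - 1) * (1 - u) ^ (β/2 - 1)) *
            ((t ^ (-((d:ℝ)/2)) * t ^ (α/2 + β/2 - 1)) * Real.exp (-‖x‖^2 / (k*t))) := by ring
      _ = _ := by rw [f2]
  · have h0 : ∀ s : ℝ, (∫ y : EuclideanSpace ℝ (Fin d), P α s ‖y‖ * P β (t - s) ‖x - y‖) = 0 := by
      intro s
      have hz : ∀ y : EuclideanSpace ℝ (Fin d), P α s ‖y‖ * P β (t - s) ‖x - y‖ = 0 := by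
        intro y
        by_cases hs0 : 0 < s
        · have hns : ¬ 0 < t - s := by push_neg at ht ⊢; linarith
          rw [hP β (t-s) ‖x-y‖, if_neg hns, mul_zero]
        · rw [hP α s ‖y‖, if_neg hs0, zero_mul]
      simp only [hz, integral_zero]
    simp only [h0, integral_zero, hP (α+β) t ‖x‖, if_neg ht, mul_zero]
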